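/- arXiv:0809.3553 — 2 statements merged into one kernel-verified Lean document; each statement's English description precedes it below -/
import Mathlib

section
/- Let ν > 0, let b₁,b₂,b₃ ∈ ℝ and nonzero α₁,α₂,α₃ ∈ ℝ satisfy Σ_{j=1}³ b_j/α_j = 0, let g₀ : ℝ → ℝ be smooth with g₀(0) = 0, let g : ℝ → ℝ be the smooth function with g(0) = 0 and g'(t) = g₀(t)·Σ_{j=1}³ 1/α_j, and set β = −ν Σ_{j=1}³ 1/α_j². Define u_i(x,t) = b_i e^{βt} sin(Σ_{s=1}³ x_s/α_s + g(t)) − g₀(t) for i = 1,2,3 and p(x,t) = g₀'(t)(x₁+x₂+x₃). Then (u,p) is C^∞ on ℝ³ × [0,∞), satisfies ∂u_i/∂t + Σ_j u_j ∂u_i/∂x_j = ν Δu_i − ∂p/∂x_i (zero external force) and div u = 0 everywhere, and u(x,0) = u⁰(x) where u⁰_i(x) = b_i sin(Σ_{s=1}³ x_s/α_s). -/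
open Real

/-- Partial derivative of `f : ℝ³ → ℝ` in the `j`-th coordinate direction. -/
noncomputable def pd (f : (Fin 3 → ℝ) → ℝ) (j : Fin 3) (x : Fin 3 → ℝ) : ℝ :=
  fderiv ℝ f x (Pi.single j 1)

/-- Spatial Laplacian of `f : ℝ³ → ℝ`. -/
noncomputable def lap (f : (Fin 3 → ℝ) → ℝ) (x : Fin 3 → ℝ) : ℝ :=
  ∑ j : Fin 3, pd (pd f j) j x

/-- One-sided (within `[0,∞)`) time derivative. -/
noncomputable def td (f : ℝ → ℝ) (t : ℝ) : ℝ :=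
  derivWithin f (Set.Ici 0) t

noncomputable def Lmap (α : Fin 3 → ℝ) : (Fin 3 → ℝ) →L[ℝ] ℝ :=
  ∑ s : Fin 3, (α s)⁻¹ • ContinuousLinearMap.proj s

lemma Lmap_apply (α : Fin 3 → ℝ) (x : Fin 3 → ℝ) : Lmap α x = ∑ s : Fin 3, x s / α s := by
  simp [Lmap, div_eq_inv_mul]

lemma Lmap_single (α : Fin 3 → ℝ) (j : Fin 3) : Lmap α (Pi.single j 1) = (α j)⁻¹ := by
  rw [Lmap_apply]
  simp [Pi.single_apply, Finset.sum_ite_eq', div_eq_inv_mul]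

lemma hasF_sin (α : Fin 3 → ℝ) (c d : ℝ) (x : Fin 3 → ℝ) :
    HasFDerivAt (fun y : Fin 3 → ℝ => c * Real.sin ((∑ s : Fin 3, y s / α s) + d))
      ((c * Real.cos ((∑ s : Fin 3, x s / α s) + d)) • Lmap α) x := by
  have h1 : HasFDerivAt (fun y : Fin 3 → ℝ => (∑ s : Fin 3, y s / α s) + d) (Lmap α) x := by
    have := ((Lmap α).hasFDerivAt (x := x)).add_const d
    simpa [Lmap_apply] using this
  have h2 := (Real.hasDerivAt_sin ((∑ s : Fin 3, x s / α s) + d)).comp_hasFDerivAt x h1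
  have h3 := h2.const_mul c
  simpa [smul_smul] using h3

lemma hasF_cos (α : Fin 3 → ℝ) (c d : ℝ) (x : Fin 3 → ℝ) :
    HasFDerivAt (fun y : Fin 3 → ℝ => c * Real.cos ((∑ s : Fin 3, y s / α s) + d))
      ((-(c * Real.sin ((∑ s : Fin 3, x s / α s) + d))) • Lmap α) x := by
  have h1 : HasFDerivAt (fun y : Fin 3 → ℝ => (∑ s : Fin 3, y s / α s) + d) (Lmap α) x := by
    have := ((Lmap α).hasFDerivAt (x := x)).add_const d
    simpa [Lmap_apply] using this
  have h2 := (Real.hasDerivAt_cos ((∑ s : Fin 3, x s / α s) + d)).comp_hasFDerivAt x h1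
  have h3 := h2.const_mul c
  have h4 : c • (-Real.sin ((∑ s : Fin 3, x s / α s) + d)) • Lmap α
      = (-(c * Real.sin ((∑ s : Fin 3, x s / α s) + d))) • Lmap α := by
    rw [smul_smul, mul_neg]
  exact h4 ▸ h3

lemma pd_sin (α : Fin 3 → ℝ) (c d e : ℝ) (j : Fin 3) (x : Fin 3 → ℝ) :
    pd (fun y => c * Real.sin ((∑ s : Fin 3, y s / α s) + d) - e) j x =
      c * Real.cos ((∑ s : Fin 3, x s / α s) + d) * (α j)⁻¹ := by
  have h := (hasF_sin α c d x).sub_const e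
  rw [pd, h.fderiv]
  simp [Lmap_single]

lemma pd_pd_sin (α : Fin 3 → ℝ) (c d e : ℝ) (j : Fin 3) (x : Fin 3 → ℝ) :
    pd (pd (fun y => c * Real.sin ((∑ s : Fin 3, y s / α s) + d) - e) j) j x =
      -(c * Real.sin ((∑ s : Fin 3, x s / α s) + d)) * ((α j)⁻¹ * (α j)⁻¹) := by
  have heq : pd (fun y => c * Real.sin ((∑ s : Fin 3, y s / α s) + d) - e) j =
      fun y => (c * (α j)⁻¹) * Real.cos ((∑ s : Fin 3, y s / α s) + d) := by
    funext y; rw [pd_sin]; ring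
  rw [heq, pd, (hasF_cos α (c * (α j)⁻¹) d x).fderiv]
  simp [Lmap_single]
  ring

lemma pd_p (C : ℝ) (i : Fin 3) (x : Fin 3 → ℝ) :
    pd (fun y : Fin 3 → ℝ => C * (y 0 + y 1 + y 2)) i x = C := by
  have h : HasFDerivAt (fun y : Fin 3 → ℝ => C * (y 0 + y 1 + y 2))
      (C • ((ContinuousLinearMap.proj 0 : (Fin 3 → ℝ) →L[ℝ] ℝ) +
        ContinuousLinearMap.proj 1 + ContinuousLinearMap.proj 2)) x := by
    have := (((ContinuousLinearMap.proj (R := ℝ) (φ := fun _ : Fin 3 => ℝ) 0) +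
        ContinuousLinearMap.proj 1 + ContinuousLinearMap.proj 2).hasFDerivAt (x := x)).const_mul C
    simpa using this
  rw [pd, h.fderiv]
  fin_cases i <;> simp [Pi.single_apply]

lemma hasDeriv_u (bi β : ℝ) (g g₀ : ℝ → ℝ) (hg : Differentiable ℝ g)
    (hg₀ : Differentiable ℝ g₀) (S t : ℝ) :
    HasDerivAt (fun t => bi * Real.exp (β * t) * Real.sin (S + g t) - g₀ t)
      (bi * (Real.exp (β * t) * β) * Real.sin (S + g t) +
        bi * Real.exp (β * t) * (Real.cos (S + g t) * deriv g t) - deriv g₀ t) t := by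
  have h1 : HasDerivAt (fun t => Real.exp (β * t)) (Real.exp (β * t) * β) t := by
    simpa [Function.comp_def] using (Real.hasDerivAt_exp (β * t)).comp t ((hasDerivAt_id t).const_mul β)
  have h2 : HasDerivAt (fun t => Real.sin (S + g t)) (Real.cos (S + g t) * deriv g t) t :=
    by have h := (Real.hasDerivAt_sin (S + g t)).comp t ((hg t).hasDerivAt.const_add S); exact h
  exact (((h1.const_mul bi).mul h2).sub (hg₀ t).hasDerivAt)

lemma smooth_u (α : Fin 3 → ℝ) (bi β : ℝ) (g g₀ : ℝ → ℝ)
    (hg : ContDiff ℝ (⊤ : ℕ∞) g) (hg₀ : ContDiff ℝ (⊤ : ℕ∞) g₀) :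
    ContDiff ℝ (⊤ : ℕ∞) (fun q : (Fin 3 → ℝ) × ℝ =>
      bi * Real.exp (β * q.2) * Real.sin ((∑ s : Fin 3, q.1 s / α s) + g q.2) - g₀ q.2) := by
  have hS : ContDiff ℝ (⊤ : ℕ∞) (fun q : (Fin 3 → ℝ) × ℝ => ∑ s : Fin 3, q.1 s / α s) :=
    ContDiff.sum fun s _ =>
      (((ContinuousLinearMap.proj s : (Fin 3 → ℝ) →L[ℝ] ℝ).contDiff).comp contDiff_fst).div_const _
  exact ((contDiff_const.mul (Real.contDiff_exp.comp (contDiff_const.mul contDiff_snd))).mul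
      (Real.contDiff_sin.comp (hS.add (hg.comp contDiff_snd)))).sub (hg₀.comp contDiff_snd)

lemma smooth_p (g₀ : ℝ → ℝ) (hg₀ : ContDiff ℝ (⊤ : ℕ∞) g₀) :
    ContDiff ℝ (⊤ : ℕ∞) (fun q : (Fin 3 → ℝ) × ℝ =>
      deriv g₀ q.2 * (q.1 0 + q.1 1 + q.1 2)) := by
  have hd : ContDiff ℝ (⊤ : ℕ∞) (deriv g₀) := (contDiff_infty_iff_deriv.mp hg₀).2
  exact (hd.comp contDiff_snd).mul
    ((((ContinuousLinearMap.proj 0 : (Fin 3 → ℝ) →L[ℝ] ℝ).contDiff).comp contDiff_fst).add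
      (((ContinuousLinearMap.proj 1 : (Fin 3 → ℝ) →L[ℝ] ℝ).contDiff).comp contDiff_fst) |>.add
      (((ContinuousLinearMap.proj 2 : (Fin 3 → ℝ) →L[ℝ] ℝ).contDiff).comp contDiff_fst))

/-- Lemma 4: the one-wave family of solutions of Navier–Stokes with zero force,
`u_i(x,t) = b_i e^{βt} sin(Σ x_s/α_s + g(t)) − g₀(t)`,
`p(x,t) = g₀'(t)(x₁+x₂+x₃)`, where `Σ b_j/α_j = 0`,
`g'(t) = g₀(t) Σ 1/α_j` and `β = −ν Σ 1/α_j²`. -/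
theorem stmt8 (ν : ℝ) (hν : 0 < ν)
    (b α : Fin 3 → ℝ) (hα : ∀ j, α j ≠ 0)
    (hbα : ∑ j : Fin 3, b j / α j = 0)
    (g₀ : ℝ → ℝ) (hg₀ : ContDiff ℝ (⊤ : ℕ∞) g₀) (hg₀0 : g₀ 0 = 0)
    (g : ℝ → ℝ) (hg : ContDiff ℝ (⊤ : ℕ∞) g) (hg0 : g 0 = 0)
    (hg' : ∀ t, deriv g t = g₀ t * ∑ j : Fin 3, 1 / α j)
    (β : ℝ) (hβ : β = -ν * ∑ j : Fin 3, 1 / (α j) ^ 2)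
    (u : Fin 3 → (Fin 3 → ℝ) → ℝ → ℝ) (p : (Fin 3 → ℝ) → ℝ → ℝ)
    (hu : ∀ i x t, u i x t =
      b i * Real.exp (β * t) * Real.sin ((∑ s : Fin 3, x s / α s) + g t) - g₀ t)
    (hp : ∀ x t, p x t = deriv g₀ t * (x 0 + x 1 + x 2)) :
    -- smoothness on ℝ³ × [0,∞)
    (∀ i : Fin 3, ContDiffOn ℝ (⊤ : ℕ∞)
      (fun q : (Fin 3 → ℝ) × ℝ => u i q.1 q.2) (Set.univ ×ˢ Set.Ici 0)) ∧
    ContDiffOn ℝ (⊤ : ℕ∞)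
      (fun q : (Fin 3 → ℝ) × ℝ => p q.1 q.2) (Set.univ ×ˢ Set.Ici 0) ∧
    -- Navier–Stokes with zero external force
    (∀ x : Fin 3 → ℝ, ∀ t : ℝ, 0 ≤ t → ∀ i : Fin 3,
      td (u i x) t + ∑ j : Fin 3, u j x t * pd (fun y => u i y t) j x =
        ν * lap (fun y => u i y t) x - pd (fun y => p y t) i x) ∧
    -- divergence-free
    (∀ x : Fin 3 → ℝ, ∀ t : ℝ, 0 ≤ t →
      ∑ i : Fin 3, pd (fun y => u i y t) i x = 0) ∧
    -- initial condition
    (∀ x : Fin 3 → ℝ, ∀ i : Fin 3,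
      u i x 0 = b i * Real.sin (∑ s : Fin 3, x s / α s)) := by
  have hfun : ∀ (i : Fin 3) (t : ℝ), (fun y => u i y t) =
      fun y => (b i * Real.exp (β * t)) * Real.sin ((∑ s : Fin 3, y s / α s) + g t) - g₀ t :=
    fun i t => funext fun y => hu i y t
  refine ⟨?_, ?_, ?_, ?_, ?_⟩
  · -- smoothness of u
    intro i
    have h := smooth_u α (b i) β g g₀ hg hg₀
    have he : (fun q : (Fin 3 → ℝ) × ℝ => u i q.1 q.2) =
        (fun q : (Fin 3 → ℝ) × ℝ =>
          b i * Real.exp (β * q.2) * Real.sin ((∑ s : Fin 3, q.1 s / α s) + g q.2) - g₀ q.2) :=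
      funext fun q => hu i q.1 q.2
    rw [he]
    exact h.contDiffOn
  · -- smoothness of p
    have h := smooth_p g₀ hg₀
    have he : (fun q : (Fin 3 → ℝ) × ℝ => p q.1 q.2) =
        (fun q : (Fin 3 → ℝ) × ℝ => deriv g₀ q.2 * (q.1 0 + q.1 1 + q.1 2)) :=
      funext fun q => hp q.1 q.2
    rw [he]
    exact h.contDiffOn
  · -- Navier–Stokes
    intro x t ht i
    set S := ∑ s : Fin 3, x s / α s with hS
    set E := Real.exp (β * t) with hE
    set si := Real.sin (S + g t) with hsi
    set co := Real.cos (S + g t) with hco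
    -- time derivative
    have hux : u i x = fun τ => b i * Real.exp (β * τ) * Real.sin (S + g τ) - g₀ τ :=
      funext fun τ => hu i x τ
    have hder := hasDeriv_u (b i) β g g₀ (hg.differentiable (by norm_num))
      (hg₀.differentiable (by norm_num)) S t
    have htd : td (u i x) t =
        b i * (E * β) * si + b i * E * (co * deriv g t) - deriv g₀ t := by
      unfold td
      rw [hux]
      rw [hder.differentiableAt.derivWithin (uniqueDiffOn_Ici 0 t ht)]
      exact hder.deriv
    -- spatial derivatives
    have hpd : ∀ (k : Fin 3) (j : Fin 3), pd (fun y => u k y t) j x =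
        (b k * E) * co * (α j)⁻¹ := fun k j => by
      rw [hfun k t, pd_sin]
    have hlap : lap (fun y => u i y t) x = -(b i * E * si) * (∑ j : Fin 3, 1 / (α j) ^ 2) := by
      unfold lap
      rw [hfun i t]
      have : ∀ j : Fin 3, pd (pd (fun y =>
          (b i * Real.exp (β * t)) * Real.sin ((∑ s : Fin 3, y s / α s) + g t) - g₀ t) j) j x =
          -(b i * E * si) * ((α j)⁻¹ * (α j)⁻¹) := fun j => by
        rw [pd_pd_sin]
      rw [Finset.sum_congr rfl fun j _ => this j, ← Finset.mul_sum]
      congr 1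
      exact Finset.sum_congr rfl fun j _ => by ring
    have hpdp : pd (fun y => p y t) i x = deriv g₀ t := by
      have he : (fun y => p y t) = fun y : Fin 3 → ℝ => deriv g₀ t * (y 0 + y 1 + y 2) :=
        funext fun y => hp y t
      rw [he, pd_p]
    have hsum : ∑ j : Fin 3, u j x t * pd (fun y => u i y t) j x =
        (b i * E * co) * (E * si * (∑ j : Fin 3, b j / α j) -
          g₀ t * (∑ j : Fin 3, 1 / α j)) := by
      have h1 : ∀ j : Fin 3, u j x t * pd (fun y => u i y t) j x =
          (b i * E * co * E * si) * (b j / α j) - (b i * E * co * g₀ t) * (1 / α j) := by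
        intro j
        rw [hpd i j, hu j x t]
        ring
      rw [Finset.sum_congr rfl fun j _ => h1 j, Finset.sum_sub_distrib,
        ← Finset.mul_sum, ← Finset.mul_sum]
      ring
    rw [htd, hsum, hlap, hpdp, hbα, hg' t, hβ]
    ring
  · -- divergence free
    intro x t ht
    have h1 : ∀ i : Fin 3, pd (fun y => u i y t) i x =
        (Real.exp (β * t) * Real.cos ((∑ s : Fin 3, x s / α s) + g t)) * (b i / α i) := by
      intro i
      rw [hfun i t, pd_sin]
      ring
    rw [Finset.sum_congr rfl fun i _ => h1 i, ← Finset.mul_sum, hbα, mul_zero]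
  · -- initial condition
    intro x i
    rw [hu]
    simp [hg0, hg₀0]
end

section
/- Let ν > 0 and for n = 1,2 let b_{i,n} ∈ ℝ and nonzero α_{i,n} ∈ ℝ (i = 1,2,3) satisfy Σ_{j=1}³ b_{j,n}/α_{j,n} = 0 for n = 1,2, together with b_{i,1}·Σ_{j=1}³ b_{j,2}/α_{j,1} = 1/α_{i,2} and b_{i,2}·Σ_{j=1}³ b_{j,1}/α_{j,2} = 1/α_{i,1} for i = 1,2,3. Set β_n = −ν Σ_{j=1}³ 1/α_{j,n}² for n = 1,2. Define u_i(x,t) = b_{i,1} e^{β₁t} sin(Σ_{s=1}³ x_s/α_{s,1}) + b_{i,2} e^{β₁t} sin(Σ_{s=1}³ x_s/α_{s,2}) and p(x,t) = cos(Σ_{j=1}³ x_j/α_{j,1})·cos(Σ_{j=1}³ x_j/α_{j,2})·e^{(β₁+β₂)t}. Then (u,p) is C^∞ on ℝ³ × [0,∞), satisfies ∂u_i/∂t + Σ_j u_j ∂u_i/∂x_j = ν Δu_i − ∂p/∂x_i (zero external force) and div u = 0 everywhere, and u(x,0) = u⁰(x) where u⁰_i(x) = b_{i,1} sin(Σ_s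 x_s/α_{s,1}) + b_{i,2} sin(Σ_s x_s/α_{s,2}). -/
open Real

noncomputable def lmap (a : Fin 3 → ℝ) : (Fin 3 → ℝ) →L[ℝ] ℝ :=
  ∑ s : Fin 3, (a s)⁻¹ • (ContinuousLinearMap.proj s : (Fin 3 → ℝ) →L[ℝ] ℝ)

lemma lmap_apply (a : Fin 3 → ℝ) (y : Fin 3 → ℝ) : lmap a y = ∑ s : Fin 3, y s / a s := by
  simp [lmap, div_eq_inv_mul, mul_comm]

lemma lmap_single (a : Fin 3 → ℝ) (j : Fin 3) : lmap a (Pi.single j 1) = (a j)⁻¹ := by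
  rw [lmap_apply]
  simp [Pi.single_apply]
  rw [Finset.sum_eq_single j] <;> simp +contextual

lemma hasFDerivAt_S (a : Fin 3 → ℝ) (x : Fin 3 → ℝ) :
    HasFDerivAt (fun y : Fin 3 → ℝ => ∑ s : Fin 3, y s / a s) (lmap a) x := by
  have h : (fun y : Fin 3 → ℝ => ∑ s : Fin 3, y s / a s) = ⇑(lmap a) :=
    funext fun y => (lmap_apply a y).symm
  rw [h]
  exact (lmap a).hasFDerivAt

lemma hasFDerivAt_sinS (a : Fin 3 → ℝ) (x : Fin 3 → ℝ) :
    HasFDerivAt (fun y : Fin 3 → ℝ => Real.sin (∑ s : Fin 3, y s / a s))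
      (Real.cos (∑ s : Fin 3, x s / a s) • lmap a) x :=
  (Real.hasDerivAt_sin _).comp_hasFDerivAt x (hasFDerivAt_S a x)

lemma hasFDerivAt_cosS (a : Fin 3 → ℝ) (x : Fin 3 → ℝ) :
    HasFDerivAt (fun y : Fin 3 → ℝ => Real.cos (∑ s : Fin 3, y s / a s))
      ((-Real.sin (∑ s : Fin 3, x s / a s)) • lmap a) x :=
  (Real.hasDerivAt_cos _).comp_hasFDerivAt x (hasFDerivAt_S a x)

lemma pd_eq {f : (Fin 3 → ℝ) → ℝ} {L : (Fin 3 → ℝ) →L[ℝ] ℝ} {x : Fin 3 → ℝ}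
    (h : HasFDerivAt f L x) (j : Fin 3) : pd f j x = L (Pi.single j 1) := by
  rw [pd, h.fderiv]

lemma pd_sincombo (A B : ℝ) (a0 a1 : Fin 3 → ℝ) (j : Fin 3) (x : Fin 3 → ℝ) :
    pd (fun y => A * Real.sin (∑ s : Fin 3, y s / a0 s) +
                 B * Real.sin (∑ s : Fin 3, y s / a1 s)) j x
      = A * (a0 j)⁻¹ * Real.cos (∑ s : Fin 3, x s / a0 s) +
        B * (a1 j)⁻¹ * Real.cos (∑ s : Fin 3, x s / a1 s) := by
  have h := ((hasFDerivAt_sinS a0 x).const_mul A).add ((hasFDerivAt_sinS a1 x).const_mul B)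
  refine (pd_eq h _).trans ?_
  simp [lmap_single, smul_smul]
  ring

lemma pd_coscombo (A B : ℝ) (a0 a1 : Fin 3 → ℝ) (j : Fin 3) (x : Fin 3 → ℝ) :
    pd (fun y => A * Real.cos (∑ s : Fin 3, y s / a0 s) +
                 B * Real.cos (∑ s : Fin 3, y s / a1 s)) j x
      = -(A * (a0 j)⁻¹ * Real.sin (∑ s : Fin 3, x s / a0 s)) +
        -(B * (a1 j)⁻¹ * Real.sin (∑ s : Fin 3, x s / a1 s)) := by
  have h := ((hasFDerivAt_cosS a0 x).const_mul A).add ((hasFDerivAt_cosS a1 x).const_mul B)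
  refine (pd_eq h _).trans ?_
  simp [lmap_single, smul_smul]
  ring

lemma lap_sincombo (A B : ℝ) (a0 a1 : Fin 3 → ℝ) (x : Fin 3 → ℝ) :
    lap (fun y => A * Real.sin (∑ s : Fin 3, y s / a0 s) +
                  B * Real.sin (∑ s : Fin 3, y s / a1 s)) x
      = -(A * (∑ j : Fin 3, 1 / (a0 j) ^ 2) * Real.sin (∑ s : Fin 3, x s / a0 s))
        - B * (∑ j : Fin 3, 1 / (a1 j) ^ 2) * Real.sin (∑ s : Fin 3, x s / a1 s) := by
  unfold lap
  calc ∑ j : Fin 3, pd (pd (fun y => A * Real.sin (∑ s : Fin 3, y s / a0 s) +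
                 B * Real.sin (∑ s : Fin 3, y s / a1 s)) j) j x
      = ∑ j : Fin 3, ((-(A * Real.sin (∑ s : Fin 3, x s / a0 s))) * (1 / (a0 j) ^ 2) +
          (-(B * Real.sin (∑ s : Fin 3, x s / a1 s))) * (1 / (a1 j) ^ 2)) := by
        refine Finset.sum_congr rfl fun j _ => ?_
        rw [show pd (fun y => A * Real.sin (∑ s : Fin 3, y s / a0 s) +
                 B * Real.sin (∑ s : Fin 3, y s / a1 s)) j
            = fun z => A * (a0 j)⁻¹ * Real.cos (∑ s : Fin 3, z s / a0 s) +
              B * (a1 j)⁻¹ * Real.cos (∑ s : Fin 3, z s / a1 s) from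
            funext fun z => pd_sincombo A B a0 a1 j z,
          pd_coscombo]
        ring
    _ = _ := by
        rw [Finset.sum_add_distrib, ← Finset.mul_sum, ← Finset.mul_sum]
        ring

lemma pd_p_s10 (C : ℝ) (a0 a1 : Fin 3 → ℝ) (i : Fin 3) (x : Fin 3 → ℝ) :
    pd (fun y => Real.cos (∑ j : Fin 3, y j / a0 j) * Real.cos (∑ j : Fin 3, y j / a1 j) * C)
        i x
      = -(Real.cos (∑ j : Fin 3, x j / a0 j) * Real.sin (∑ j : Fin 3, x j / a1 j) * (a1 i)⁻¹ * C)
        - Real.sin (∑ j : Fin 3, x j / a0 j) * Real.cos (∑ j : Fin 3, x j / a1 j) * (a0 i)⁻¹ * C := by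
  have h := ((hasFDerivAt_cosS a0 x).mul (hasFDerivAt_cosS a1 x)).mul_const C
  refine (pd_eq h _).trans ?_
  simp [lmap_single, smul_smul]
  ring

lemma td_combo (c0 c1 γ k0 k1 : ℝ) {t : ℝ} (ht : 0 ≤ t) :
    td (fun t => c0 * Real.exp (γ * t) * k0 + c1 * Real.exp (γ * t) * k1) t
      = γ * (c0 * Real.exp (γ * t) * k0 + c1 * Real.exp (γ * t) * k1) := by
  have hγ : HasDerivAt (fun t : ℝ => γ * t) γ t := by
    simpa using (hasDerivAt_id t).const_mul γ
  have hexp : HasDerivAt (fun t : ℝ => Real.exp (γ * t)) (Real.exp (γ * t) * γ) t := hγ.exp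
  have h : HasDerivAt (fun t : ℝ => c0 * Real.exp (γ * t) * k0 + c1 * Real.exp (γ * t) * k1)
      (c0 * (Real.exp (γ * t) * γ) * k0 + c1 * (Real.exp (γ * t) * γ) * k1) t :=
    ((hexp.const_mul c0).mul_const k0).add ((hexp.const_mul c1).mul_const k1)
  rw [td, h.hasDerivWithinAt.derivWithin (uniqueDiffOn_Ici (0:ℝ) t ht)]
  ring

lemma contDiff_sum_coord (a : Fin 3 → ℝ) :
    ContDiff ℝ (⊤ : ℕ∞) (fun q : (Fin 3 → ℝ) × ℝ => ∑ s : Fin 3, q.1 s / a s) :=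
  ContDiff.sum fun s _ =>
    (((ContinuousLinearMap.proj s).comp (ContinuousLinearMap.fst ℝ (Fin 3 → ℝ) ℝ)).contDiff).div_const _

lemma contDiff_wave (A γ : ℝ) (a : Fin 3 → ℝ) :
    ContDiff ℝ (⊤ : ℕ∞)
      (fun q : (Fin 3 → ℝ) × ℝ => A * Real.exp (γ * q.2) * Real.sin (∑ s : Fin 3, q.1 s / a s)) := by
  apply ContDiff.mul
  · exact contDiff_const.mul (Real.contDiff_exp.comp (contDiff_const.mul contDiff_snd))
  · exact Real.contDiff_sin.comp (contDiff_sum_coord a)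

/-- Lemma 6: the two-wave solution of Navier–Stokes with zero force, under the
compatibility conditions on `b_{i,n}` and `α_{i,n}`. -/
theorem stmt10 (ν : ℝ) (hν : 0 < ν)
    (b α : Fin 3 → Fin 2 → ℝ) (hα : ∀ i n, α i n ≠ 0)
    (hbα : ∀ n : Fin 2, ∑ j : Fin 3, b j n / α j n = 0)
    (hc1 : ∀ i : Fin 3, b i 0 * ∑ j : Fin 3, b j 1 / α j 0 = 1 / α i 1)
    (hc2 : ∀ i : Fin 3, b i 1 * ∑ j : Fin 3, b j 0 / α j 1 = 1 / α i 0)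
    (β : Fin 2 → ℝ) (hβ : ∀ n, β n = -ν * ∑ j : Fin 3, 1 / (α j n) ^ 2)
    (u : Fin 3 → (Fin 3 → ℝ) → ℝ → ℝ) (p : (Fin 3 → ℝ) → ℝ → ℝ)
    (hu : ∀ i x t, u i x t =
      b i 0 * Real.exp (β 0 * t) * Real.sin (∑ s : Fin 3, x s / α s 0) +
      b i 1 * Real.exp (β 0 * t) * Real.sin (∑ s : Fin 3, x s / α s 1))
    (hp : ∀ x t, p x t =
      Real.cos (∑ j : Fin 3, x j / α j 0) * Real.cos (∑ j : Fin 3, x j / α j 1) *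
        Real.exp ((β 0 + β 1) * t)) :
    -- smoothness on ℝ³ × [0,∞)
    (∀ i : Fin 3, ContDiffOn ℝ (⊤ : ℕ∞)
      (fun q : (Fin 3 → ℝ) × ℝ => u i q.1 q.2) (Set.univ ×ˢ Set.Ici 0)) ∧
    ContDiffOn ℝ (⊤ : ℕ∞)
      (fun q : (Fin 3 → ℝ) × ℝ => p q.1 q.2) (Set.univ ×ˢ Set.Ici 0) ∧
    -- Navier–Stokes with zero external force
    (∀ x : Fin 3 → ℝ, ∀ t : ℝ, 0 ≤ t → ∀ i : Fin 3,
      td (u i x) t + ∑ j : Fin 3, u j x t * pd (fun y => u i y t) j x =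
        ν * lap (fun y => u i y t) x - pd (fun y => p y t) i x) ∧
    -- divergence-free
    (∀ x : Fin 3 → ℝ, ∀ t : ℝ, 0 ≤ t →
      ∑ i : Fin 3, pd (fun y => u i y t) i x = 0) ∧
    -- initial condition
    (∀ x : Fin 3 → ℝ, ∀ i : Fin 3,
      u i x 0 = b i 0 * Real.sin (∑ s : Fin 3, x s / α s 0) +
                b i 1 * Real.sin (∑ s : Fin 3, x s / α s 1)) := by
  -- key algebraic consequences
  have hK0 : (∑ j : Fin 3, 1 / (α j 0) ^ 2)
      = (∑ j : Fin 3, b j 0 / α j 1) * (∑ j : Fin 3, b j 1 / α j 0) := by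
    calc ∑ j : Fin 3, 1 / (α j 0) ^ 2
        = ∑ j : Fin 3, (∑ k : Fin 3, b k 0 / α k 1) * (b j 1 / α j 0) :=
          Finset.sum_congr rfl fun j _ => by linear_combination (-(α j 0)⁻¹) * hc2 j
      _ = _ := by rw [← Finset.mul_sum]
  have hK1 : (∑ j : Fin 3, 1 / (α j 1) ^ 2)
      = (∑ j : Fin 3, b j 1 / α j 0) * (∑ j : Fin 3, b j 0 / α j 1) := by
    calc ∑ j : Fin 3, 1 / (α j 1) ^ 2
        = ∑ j : Fin 3, (∑ k : Fin 3, b k 1 / α k 0) * (b j 0 / α j 1) :=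
          Finset.sum_congr rfl fun j _ => by linear_combination (-(α j 1)⁻¹) * hc1 j
      _ = _ := by rw [← Finset.mul_sum]
  have hββ : β 0 = β 1 := by rw [hβ 0, hβ 1, hK0, hK1]; ring
  refine ⟨?_, ?_, ?_, ?_, ?_⟩
  · -- smoothness of u
    intro i
    apply ContDiff.contDiffOn
    have h : (fun q : (Fin 3 → ℝ) × ℝ => u i q.1 q.2)
        = fun q : (Fin 3 → ℝ) × ℝ =>
            b i 0 * Real.exp (β 0 * q.2) * Real.sin (∑ s : Fin 3, q.1 s / α s 0) +
            b i 1 * Real.exp (β 0 * q.2) * Real.sin (∑ s : Fin 3, q.1 s / α s 1) :=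
      funext fun q => hu i q.1 q.2
    rw [h]
    exact (contDiff_wave _ _ _).add (contDiff_wave _ _ _)
  · -- smoothness of p
    apply ContDiff.contDiffOn
    have h : (fun q : (Fin 3 → ℝ) × ℝ => p q.1 q.2)
        = fun q : (Fin 3 → ℝ) × ℝ =>
            Real.cos (∑ j : Fin 3, q.1 j / α j 0) * Real.cos (∑ j : Fin 3, q.1 j / α j 1) *
              Real.exp ((β 0 + β 1) * q.2) :=
      funext fun q => hp q.1 q.2
    rw [h]
    exact ((Real.contDiff_cos.comp (contDiff_sum_coord _)).mul
      (Real.contDiff_cos.comp (contDiff_sum_coord _))).mul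
      (Real.contDiff_exp.comp (contDiff_const.mul contDiff_snd))
  · -- Navier–Stokes equation
    intro x t ht i
    have hux : u i x = fun t => b i 0 * Real.exp (β 0 * t) * Real.sin (∑ s : Fin 3, x s / α s 0) +
        b i 1 * Real.exp (β 0 * t) * Real.sin (∑ s : Fin 3, x s / α s 1) :=
      funext fun t => hu i x t
    rw [hux, td_combo _ _ _ _ _ ht]
    simp only [hu, hp, pd_sincombo, lap_sincombo, pd_p_s10]
    have hE2 : Real.exp ((β 0 + β 1) * t) = Real.exp (β 0 * t) * Real.exp (β 0 * t) := by
      rw [← hββ, show (β 0 + β 0) * t = β 0 * t + β 0 * t by ring, Real.exp_add]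
    rw [hE2]
    have hnl : (∑ j : Fin 3,
        (b j 0 * Real.exp (β 0 * t) * Real.sin (∑ s : Fin 3, x s / α s 0) +
         b j 1 * Real.exp (β 0 * t) * Real.sin (∑ s : Fin 3, x s / α s 1)) *
        (b i 0 * Real.exp (β 0 * t) * (α j 0)⁻¹ * Real.cos (∑ s : Fin 3, x s / α s 0) +
         b i 1 * Real.exp (β 0 * t) * (α j 1)⁻¹ * Real.cos (∑ s : Fin 3, x s / α s 1)))
        = (b i 0 * Real.exp (β 0 * t) * Real.exp (β 0 * t) * Real.cos (∑ s : Fin 3, x s / α s 0)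
            * Real.sin (∑ s : Fin 3, x s / α s 0)) * (∑ j : Fin 3, b j 0 / α j 0)
        + (b i 0 * Real.exp (β 0 * t) * Real.exp (β 0 * t) * Real.cos (∑ s : Fin 3, x s / α s 0)
            * Real.sin (∑ s : Fin 3, x s / α s 1)) * (∑ j : Fin 3, b j 1 / α j 0)
        + (b i 1 * Real.exp (β 0 * t) * Real.exp (β 0 * t) * Real.cos (∑ s : Fin 3, x s / α s 1)
            * Real.sin (∑ s : Fin 3, x s / α s 0)) * (∑ j : Fin 3, b j 0 / α j 1)
        + (b i 1 * Real.exp (β 0 * t) * Real.exp (β 0 * t) * Real.cos (∑ s : Fin 3, x s / α s 1)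
            * Real.sin (∑ s : Fin 3, x s / α s 1)) * (∑ j : Fin 3, b j 1 / α j 1) := by
      rw [Finset.mul_sum, Finset.mul_sum, Finset.mul_sum, Finset.mul_sum,
        ← Finset.sum_add_distrib, ← Finset.sum_add_distrib, ← Finset.sum_add_distrib]
      exact Finset.sum_congr rfl fun j _ => by ring
    rw [hnl, hbα 0, hbα 1]
    linear_combination
      (b i 0 * Real.exp (β 0 * t) * Real.sin (∑ s : Fin 3, x s / α s 0) +
       b i 1 * Real.exp (β 0 * t) * Real.sin (∑ s : Fin 3, x s / α s 1)) * hβ 0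
      + (Real.exp (β 0 * t) * Real.exp (β 0 * t) * Real.cos (∑ s : Fin 3, x s / α s 0) *
          Real.sin (∑ s : Fin 3, x s / α s 1)) * hc1 i
      + (Real.exp (β 0 * t) * Real.exp (β 0 * t) * Real.cos (∑ s : Fin 3, x s / α s 1) *
          Real.sin (∑ s : Fin 3, x s / α s 0)) * hc2 i
      + (ν * b i 1 * Real.exp (β 0 * t) * Real.sin (∑ s : Fin 3, x s / α s 1)) * hK1
      - (ν * b i 1 * Real.exp (β 0 * t) * Real.sin (∑ s : Fin 3, x s / α s 1)) * hK0
  · -- divergence free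
    intro x t ht
    simp only [hu, pd_sincombo]
    have h : (∑ i : Fin 3,
        (b i 0 * Real.exp (β 0 * t) * (α i 0)⁻¹ * Real.cos (∑ s : Fin 3, x s / α s 0) +
         b i 1 * Real.exp (β 0 * t) * (α i 1)⁻¹ * Real.cos (∑ s : Fin 3, x s / α s 1)))
        = (Real.exp (β 0 * t) * Real.cos (∑ s : Fin 3, x s / α s 0)) * (∑ j : Fin 3, b j 0 / α j 0)
        + (Real.exp (β 0 * t) * Real.cos (∑ s : Fin 3, x s / α s 1)) * (∑ j : Fin 3, b j 1 / α j 1) := by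
      rw [Finset.mul_sum, Finset.mul_sum, ← Finset.sum_add_distrib]
      exact Finset.sum_congr rfl fun j _ => by ring
    rw [h, hbα 0, hbα 1]
    ring
  · -- initial condition
    intro x i
    rw [hu]
    simp
end
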